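/- (Discrete localization for two functions) Let M ≤ N be integers, γ a measure on ℤ with mass function q positive on a contiguous support containing ⟦M,N⟧, and f, g : ⟦M,N⟧ → ℝ. Then the pair of inequalities Σᵢ f(i)·μ(i) ≥ 0 and Σᵢ g(i)·μ(i) ≥ 0 holds for every probability mass function μ supported on ⟦M,N⟧ that is log-concave with respect to γ if and only if the pair Σᵢ f(i)·ν(i) ≥ 0 and Σᵢ g(i)·ν(i) ≥ 0 holds for every probability mass function ν supported on ⟦M,N⟧ that is log-affine with respect to γ. -/
import Mathlib


/-- The support of `f : ℤ → ℝ` is contiguous. -/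
def ContigSupportInt (f : ℤ → ℝ) : Prop :=
  ∀ a b c : ℤ, a ≤ b → b ≤ c → 0 < f a → 0 < f c → 0 < f b

/-- `p` is a probability mass function supported on `⟦M,N⟧`. -/
def IsPMFOn (M N : ℤ) (p : ℤ → ℝ) : Prop :=
  (∀ n, 0 ≤ p n) ∧ (∀ n : ℤ, n ∉ Finset.Icc M N → p n = 0) ∧
    (∑ n ∈ Finset.Icc M N, p n) = 1

/-- `p` is log-concave with respect to the reference mass function `q`. -/
def IsLogConcaveWrt (q p : ℤ → ℝ) : Prop :=
  (∀ n : ℤ, (p (n - 1) / q (n - 1)) * (p (n + 1) / q (n + 1)) ≤ (p n / q n) ^ 2) ∧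
    ContigSupportInt (fun n => p n / q n)

/-- `p` is log-affine with respect to the reference mass function `q`: the ratio `p/q`
satisfies the log-affine equation on (the interior of) its contiguous support. -/
def IsLogAffineWrt (q p : ℤ → ℝ) : Prop :=
  (∀ n : ℤ, 0 < p (n - 1) / q (n - 1) → 0 < p (n + 1) / q (n + 1) →
      (p (n - 1) / q (n - 1)) * (p (n + 1) / q (n + 1)) = (p n / q n) ^ 2) ∧
    ContigSupportInt (fun n => p n / q n)

/-- A log-affine p.m.f. is log-concave. -/
lemma logAffine_logConcave {M N : ℤ} {q p : ℤ → ℝ} (hq0 : ∀ n, 0 ≤ q n)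
    (hp : IsPMFOn M N p) (h : IsLogAffineWrt q p) : IsLogConcaveWrt q p := by
  obtain ⟨heq, hc⟩ := h
  refine ⟨fun n => ?_, hc⟩
  have hr : ∀ m : ℤ, 0 ≤ p m / q m := fun m => div_nonneg (hp.1 m) (hq0 m)
  rcases lt_or_eq_of_le (hr (n - 1)) with h1 | h1
  · rcases lt_or_eq_of_le (hr (n + 1)) with h2 | h2
    · exact (heq n h1 h2).le
    · rw [← h2, mul_zero]; positivity
  · rw [← h1, zero_mul]; positivity

/-- If `p` is positive on `⟦a,b⟧`, zero outside, and the ratio `p/q` is geometric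
on `⟦a,b⟧`, then `∑ f·p ≥ 0`, given that this holds for all log-affine p.m.f.s. -/
lemma geom_nonneg (M N : ℤ) (q : ℤ → ℝ)
    (hqpos : ∀ n ∈ Finset.Icc M N, 0 < q n) (f : ℤ → ℝ)
    (hLA : ∀ ν : ℤ → ℝ, IsPMFOn M N ν → IsLogAffineWrt q ν →
      0 ≤ ∑ i ∈ Finset.Icc M N, f i * ν i)
    (p : ℤ → ℝ) (a b : ℤ) (r : ℝ)
    (hMa : M ≤ a) (hab : a ≤ b) (hbN : b ≤ N)
    (hpos : ∀ n : ℤ, a ≤ n → n ≤ b → 0 < p n)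
    (hzero : ∀ n : ℤ, n < a ∨ b < n → p n = 0)
    (hrun : ∀ n : ℤ, a ≤ n → n < b → p (n + 1) / q (n + 1) = r * (p n / q n)) :
    0 ≤ ∑ i ∈ Finset.Icc M N, f i * p i := by
  have hnn : ∀ n : ℤ, 0 ≤ p n := by
    intro n
    by_cases h : a ≤ n ∧ n ≤ b
    · exact (hpos n h.1 h.2).le
    · rw [hzero n (by omega)]
  set S := ∑ i ∈ Finset.Icc M N, p i with hS
  have hSpos : 0 < S := by
    have h1 : p a ≤ S :=
      Finset.single_le_sum (fun i _ => hnn i) (by rw [Finset.mem_Icc]; omega)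
    have := hpos a le_rfl hab
    linarith
  have hratio0 : ∀ x : ℤ, x < a ∨ b < x → p x / q x = 0 := by
    intro x hx; rw [hzero x hx, zero_div]
  have hratiopos : ∀ x : ℤ, a ≤ x → x ≤ b → 0 < p x / q x := by
    intro x h1 h2
    exact div_pos (hpos x h1 h2) (hqpos x (by rw [Finset.mem_Icc]; omega))
  set ν : ℤ → ℝ := fun n => p n / S with hν
  have hratioeq : ∀ x : ℤ, ν x / q x = p x / q x / S := by
    intro x; simp only [hν]; ring
  have hmemν : ∀ x : ℤ, 0 < ν x / q x → a ≤ x ∧ x ≤ b := by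
    intro x hx
    by_contra h
    rw [hratioeq, hratio0 x (by omega), zero_div] at hx
    exact lt_irrefl 0 hx
  have hpmf : IsPMFOn M N ν := by
    refine ⟨fun n => div_nonneg (hnn n) hSpos.le, fun n hn => ?_, ?_⟩
    · rw [Finset.mem_Icc] at hn
      simp only [hν]
      rw [hzero n (by omega), zero_div]
    · simp only [hν]
      rw [← Finset.sum_div, ← hS, div_self hSpos.ne']
  have hla : IsLogAffineWrt q ν := by
    constructor
    · intro n h1 h2
      obtain ⟨ha1, hb1⟩ := hmemν _ h1
      obtain ⟨ha2, hb2⟩ := hmemν _ h2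
      have E1 := hrun (n - 1) (by omega) (by omega)
      have E2 := hrun n (by omega) (by omega)
      rw [hratioeq, hratioeq, hratioeq]
      have e : n - 1 + 1 = n := by ring
      rw [e] at E1
      linear_combination (p (n - 1) / q (n - 1) / S ^ 2) * E2 -
        (p n / q n / S ^ 2) * E1
    · intro x y z hxy hyz h0x h0z
      obtain ⟨ha1, hb1⟩ := hmemν _ h0x
      obtain ⟨ha2, hb2⟩ := hmemν _ h0z
      show 0 < ν y / q y
      rw [hratioeq]
      exact div_pos (hratiopos y (by omega) (by omega)) hSpos
  have h0 := hLA ν hpmf hla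
  have hsum : ∑ i ∈ Finset.Icc M N, f i * ν i =
      (∑ i ∈ Finset.Icc M N, f i * p i) / S := by
    rw [Finset.sum_div]
    exact Finset.sum_congr rfl fun i _ => by simp only [hν]; ring
  rw [hsum] at h0
  have := mul_nonneg h0 hSpos.le
  rwa [div_mul_cancel₀ _ hSpos.ne'] at this

/-- Key induction: peeling geometric needles off a log-concave function. -/
lemma key (M N : ℤ) (q : ℤ → ℝ)
    (hqpos : ∀ n ∈ Finset.Icc M N, 0 < q n) (f : ℤ → ℝ)
    (hLA : ∀ ν : ℤ → ℝ, IsPMFOn M N ν → IsLogAffineWrt q ν →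
      0 ≤ ∑ i ∈ Finset.Icc M N, f i * ν i) :
    ∀ (k : ℕ) (μ : ℤ → ℝ) (a b c : ℤ) (r : ℝ),
      (∀ n : ℤ, μ (n - 1) / q (n - 1) * (μ (n + 1) / q (n + 1)) ≤ (μ n / q n) ^ 2) →
      M ≤ a → a ≤ c → c < b → b ≤ N →
      (∀ n : ℤ, a ≤ n → n ≤ b → 0 < μ n) →
      (∀ n : ℤ, n < a ∨ b < n → μ n = 0) →
      0 < r →
      (∀ n : ℤ, c ≤ n → n < b → μ (n + 1) / q (n + 1) = r * (μ n / q n)) →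
      (c - a).toNat ≤ k →
      0 ≤ ∑ i ∈ Finset.Icc M N, f i * μ i := by
  intro k
  induction k with
  | zero =>
    intro μ a b c r horig hMa hac hcb hbN hpos hzero hr hrun hk
    have hca : c = a := by omega
    subst hca
    exact geom_nonneg M N q hqpos f hLA μ c b r hMa (by omega) hbN hpos hzero hrun
  | succ k ih =>
    intro μ a b c r horig hMa hac hcb hbN hpos hzero hr hrun hk
    by_cases hca : c = a
    · subst hca
      exact geom_nonneg M N q hqpos f hLA μ c b r hMa (by omega) hbN hpos hzero hrun
    have hac' : a < c := by omega
    have hq' : ∀ x : ℤ, a ≤ x → x ≤ b → 0 < q x := fun x h1 h2 =>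
      hqpos x (by rw [Finset.mem_Icc]; omega)
    have hu : ∀ x : ℤ, a ≤ x → x ≤ b → 0 < μ x / q x := fun x h1 h2 =>
      div_pos (hpos x h1 h2) (hq' x h1 h2)
    have hucp := hu c hac (by omega)
    have huc1p := hu (c - 1) (by omega) (by omega)
    have hrc : μ (c + 1) / q (c + 1) = r * (μ c / q c) := hrun c le_rfl hcb
    have hstep : r * (μ (c - 1) / q (c - 1)) ≤ μ c / q c := by
      have h1 := horig c
      rw [hrc] at h1
      nlinarith [hucp]
    by_cases hEq : μ c / q c = r * (μ (c - 1) / q (c - 1))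
    · -- extend the geometric run
      refine ih μ a b (c - 1) r horig hMa (by omega) (by omega) hbN hpos hzero hr ?_ (by omega)
      intro n h1 h2
      rcases eq_or_lt_of_le h1 with h3 | h3
      · subst h3
        have e : c - 1 + 1 = c := by ring
        rw [e]
        exact hEq
      · exact hrun n (by omega) h2
    -- strict case: peel off a needle on ⟦c,b⟧
    have hlt : r * (μ (c - 1) / q (c - 1)) < μ c / q c :=
      lt_of_le_of_ne hstep (fun h => hEq h.symm)
    set β : ℝ := r * (μ (c - 1) / q (c - 1)) / (μ c / q c) with hβ
    have hβpos : 0 < β := div_pos (mul_pos hr huc1p) hucp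
    have hβlt : β < 1 := (div_lt_one hucp).2 hlt
    have hβuc : β * (μ c / q c) = r * (μ (c - 1) / q (c - 1)) := by
      rw [hβ, div_mul_cancel₀ _ hucp.ne']
    set s : ℤ → ℝ := fun x => if c ≤ x ∧ x ≤ b then β else 1 with hs
    set ν : ℤ → ℝ := fun n => if c ≤ n ∧ n ≤ b then μ n else 0 with hν
    set μ' : ℤ → ℝ := fun n => s n * μ n with hμ'
    have hspos : ∀ x : ℤ, 0 < s x := by
      intro x; simp only [hs]
      split
      · exact hβpos
      · norm_num
    have hratio' : ∀ x : ℤ, μ' x / q x = s x * (μ x / q x) := fun x => by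
      simp only [hμ']; ring
    -- the needle contributes nonnegatively
    have hνnn : 0 ≤ ∑ i ∈ Finset.Icc M N, f i * ν i := by
      refine geom_nonneg M N q hqpos f hLA ν c b r (by omega) (by omega) hbN
        (fun n h1 h2 => ?_) (fun n h => ?_) (fun n h1 h2 => ?_)
      · simp only [hν]
        rw [if_pos ⟨h1, h2⟩]
        exact hpos n (by omega) h2
      · simp only [hν]
        rw [if_neg (by omega)]
      · simp only [hν]
        rw [if_pos ⟨by omega, by omega⟩, if_pos ⟨h1, by omega⟩]
        exact hrun n h1 h2
    -- the remainder μ' is log-concave with a longer geometric run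
    have horig' : ∀ n : ℤ,
        μ' (n - 1) / q (n - 1) * (μ' (n + 1) / q (n + 1)) ≤ (μ' n / q n) ^ 2 := by
      intro n
      rw [hratio', hratio', hratio']
      by_cases h1 : n - 1 < a ∨ b < n - 1
      · rw [hzero _ h1, zero_div, mul_zero, zero_mul]
        positivity
      by_cases h2 : n + 1 < a ∨ b < n + 1
      · rw [hzero _ h2, zero_div, mul_zero, mul_zero]
        positivity
      push_neg at h1 h2
      have hn1a : a ≤ n - 1 := h1.1
      have hn1b : n - 1 ≤ b := h1.2
      have hn2a : a ≤ n + 1 := h2.1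
      have hn2b : n + 1 ≤ b := h2.2
      by_cases hc1 : n + 1 < c
      · simp only [hs]
        rw [if_neg (by omega), if_neg (by omega), if_neg (by omega)]
        simpa using horig n
      by_cases hc2 : n + 1 = c
      · simp only [hs]
        rw [if_neg (by omega), if_pos ⟨by omega, by omega⟩, if_neg (by omega)]
        have h0 := horig n
        have ha1 := hu (n - 1) (by omega) (by omega)
        have ha2 := hu (n + 1) (by omega) (by omega)
        nlinarith [hβpos, hβlt, mul_pos ha1 ha2]
      by_cases hc3 : n = c
      · rw [hc3]
        simp only [hs]
        rw [if_neg (by omega), if_pos ⟨by omega, by omega⟩, if_pos ⟨le_rfl, by omega⟩]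
        have heq : 1 * (μ (c - 1) / q (c - 1)) * (β * (μ (c + 1) / q (c + 1))) =
            (β * (μ c / q c)) ^ 2 := by
          linear_combination (μ (c - 1) / q (c - 1) * β) * hrc -
            (β * (μ c / q c)) * hβuc
        exact le_of_eq heq
      · have hge : c ≤ n - 1 := by omega
        simp only [hs]
        rw [if_pos ⟨by omega, by omega⟩, if_pos ⟨by omega, by omega⟩,
          if_pos ⟨by omega, by omega⟩]
        have h0 := horig n
        nlinarith [h0, sq_nonneg β]
    have hrun' : ∀ n : ℤ, c - 1 ≤ n → n < b →
        μ' (n + 1) / q (n + 1) = r * (μ' n / q n) := by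
      intro n h1 h2
      rw [hratio', hratio']
      rcases eq_or_lt_of_le h1 with h3 | h3
      · rw [← h3]
        simp only [hs]
        have e : c - 1 + 1 = c := by ring
        rw [e, if_pos ⟨by omega, by omega⟩, if_neg (by omega)]
        linear_combination hβuc
      · have h4 : c ≤ n := by omega
        simp only [hs]
        rw [if_pos ⟨by omega, by omega⟩, if_pos ⟨by omega, by omega⟩,
          hrun n h4 h2]
        ring
    have hpos' : ∀ n : ℤ, a ≤ n → n ≤ b → 0 < μ' n := by
      intro n hh1 hh2
      simp only [hμ']
      exact mul_pos (hspos n) (hpos n hh1 hh2)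
    have hzero' : ∀ n : ℤ, n < a ∨ b < n → μ' n = 0 := by
      intro n h
      simp only [hμ']
      rw [hzero n h, mul_zero]
    have hrec := ih μ' a b (c - 1) r horig' hMa (by omega) (by omega) hbN
      hpos' hzero' hr hrun' (by omega)
    -- decomposition μ = (1-β)·ν + μ'
    have hdec : ∀ n : ℤ, f n * μ n = (1 - β) * (f n * ν n) + f n * μ' n := by
      intro n
      simp only [hν, hμ', hs]
      by_cases h : c ≤ n ∧ n ≤ b
      · rw [if_pos h, if_pos h]; ring
      · rw [if_neg h, if_neg h]; ring
    calc (0 : ℝ) ≤ (1 - β) * ∑ i ∈ Finset.Icc M N, f i * ν i +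
        ∑ i ∈ Finset.Icc M N, f i * μ' i :=
        add_nonneg (mul_nonneg (by linarith) hνnn) hrec
      _ = ∑ i ∈ Finset.Icc M N, f i * μ i := by
        rw [Finset.mul_sum, ← Finset.sum_add_distrib]
        exact Finset.sum_congr rfl fun i _ => (hdec i).symm

/-- Discrete localization for two functions: the pair of inequalities
`Σ f(i)·μ(i) ≥ 0` and `Σ g(i)·μ(i) ≥ 0` holds for every log-concave p.m.f. `μ` on
`⟦M,N⟧` iff it holds for every log-affine p.m.f. `ν` on `⟦M,N⟧`. -/
theorem localization_two_functions (M N : ℤ) (hMN : M ≤ N)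
    (q : ℤ → ℝ) (hq0 : ∀ n, 0 ≤ q n) (hqc : ContigSupportInt q)
    (hqpos : ∀ n ∈ Finset.Icc M N, 0 < q n)
    (f g : ℤ → ℝ) :
    (∀ μ : ℤ → ℝ, IsPMFOn M N μ → IsLogConcaveWrt q μ →
        0 ≤ ∑ i ∈ Finset.Icc M N, f i * μ i ∧ 0 ≤ ∑ i ∈ Finset.Icc M N, g i * μ i) ↔
      (∀ ν : ℤ → ℝ, IsPMFOn M N ν → IsLogAffineWrt q ν →
        0 ≤ ∑ i ∈ Finset.Icc M N, f i * ν i ∧ 0 ≤ ∑ i ∈ Finset.Icc M N, g i * ν i) := by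
  constructor
  · intro h ν hν hla
    exact h ν hν (logAffine_logConcave hq0 hν hla)
  · intro h μ hμ hlc
    obtain ⟨hnn, hout, hsum⟩ := hμ
    obtain ⟨horig, hcontig⟩ := hlc
    set S := (Finset.Icc M N).filter (fun n => 0 < μ n) with hSdef
    have hSne : S.Nonempty := by
      by_contra h'
      rw [Finset.not_nonempty_iff_eq_empty] at h'
      have hz : ∑ n ∈ Finset.Icc M N, μ n = 0 := by
        refine Finset.sum_eq_zero fun n hn => ?_
        by_contra hne
        have hp : 0 < μ n := lt_of_le_of_ne (hnn n) (Ne.symm hne)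
        have : n ∈ S := by rw [hSdef, Finset.mem_filter]; exact ⟨hn, hp⟩
        rw [h'] at this
        exact absurd this (Finset.notMem_empty n)
      rw [hsum] at hz
      norm_num at hz
    set a := S.min' hSne with ha
    set b := S.max' hSne with hb
    have haS : a ∈ S := S.min'_mem hSne
    have hbS : b ∈ S := S.max'_mem hSne
    have haIcc := (Finset.mem_filter.mp haS).1
    have hbIcc := (Finset.mem_filter.mp hbS).1
    have hμa : 0 < μ a := (Finset.mem_filter.mp haS).2
    have hμb : 0 < μ b := (Finset.mem_filter.mp hbS).2
    rw [Finset.mem_Icc] at haIcc hbIcc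
    have hab : a ≤ b := S.min'_le b hbS
    have hqposab : ∀ x : ℤ, a ≤ x → x ≤ b → 0 < q x := fun x h1 h2 =>
      hqpos x (by rw [Finset.mem_Icc]; omega)
    have hpos : ∀ n : ℤ, a ≤ n → n ≤ b → 0 < μ n := by
      intro n h1 h2
      have hra : 0 < μ a / q a := div_pos hμa (hqposab a le_rfl hab)
      have hrb : 0 < μ b / q b := div_pos hμb (hqposab b hab le_rfl)
      have hcn := hcontig a n b h1 h2 hra hrb
      change 0 < μ n / q n at hcn
      by_contra h'
      have hn0 : μ n = 0 := le_antisymm (not_lt.mp h') (hnn n)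
      rw [hn0, zero_div] at hcn
      exact lt_irrefl 0 hcn
    have hzero : ∀ n : ℤ, n < a ∨ b < n → μ n = 0 := by
      intro n hn
      by_cases hmem : n ∈ Finset.Icc M N
      · by_contra h'
        have h0 : 0 < μ n := lt_of_le_of_ne (hnn n) (Ne.symm h')
        have hnS : n ∈ S := Finset.mem_filter.2 ⟨hmem, h0⟩
        have := S.min'_le n hnS
        have := S.le_max' n hnS
        omega
      · exact hout n hmem
    have main : ∀ F : ℤ → ℝ,
        (∀ ν : ℤ → ℝ, IsPMFOn M N ν → IsLogAffineWrt q ν →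
          0 ≤ ∑ i ∈ Finset.Icc M N, F i * ν i) →
        0 ≤ ∑ i ∈ Finset.Icc M N, F i * μ i := by
      intro F hF
      rcases eq_or_lt_of_le hab with hab' | hab'
      · refine geom_nonneg M N q hqpos F hF μ a b 1 haIcc.1 hab hbIcc.2 hpos hzero ?_
        intro n h1 h2
        exfalso; omega
      · have hb1 : a ≤ b - 1 := by omega
        have hub1 : 0 < μ (b - 1) / q (b - 1) :=
          div_pos (hpos _ hb1 (by omega)) (hqposab _ hb1 (by omega))
        refine key M N q hqpos F hF (b - 1 - a).toNat μ a b (b - 1)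
          ((μ b / q b) / (μ (b - 1) / q (b - 1))) horig haIcc.1 hb1 (by omega)
          hbIcc.2 hpos hzero
          (div_pos (div_pos hμb (hqposab b hab le_rfl)) hub1) ?_ le_rfl
        intro n h1 h2
        have hn : n = b - 1 := by omega
        subst hn
        have e : b - 1 + 1 = b := by ring
        rw [e]
        exact (div_mul_cancel₀ _ hub1.ne').symm
    exact ⟨main f (fun ν h1 h2 => (h ν h1 h2).1), main g (fun ν h1 h2 => (h ν h1 h2).2)⟩
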